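/- For every Schröder path γ of semilength n, the number of Schröder paths of semilength n that cover γ in the Schröder lattice S_n equals ω_H(γ) + ω_DU(γ), and the number of Schröder paths of semilength n covered by γ equals ω*_H(γ) + ω_UD(γ), where ω_H(γ) is the number of horizontal steps of γ, ω*_H(γ) is the number of horizontal steps of γ at height at least 1, ω_DU(γ) is the number of occurrences of a D step immediately followed by a U step, and ω_UD(γ) is the number of occurrences of a U step immediately followed by a D step. -/

import Mathlib

/-- Steps of a (Grand) Schröder path: up `U = (1,1)`, down `D = (1,-1)`
and double horizontal `H = (2,0)`. -/
inductive Step : Type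
  | U : Step
  | D : Step
  | H : Step
  deriving DecidableEq

/-- The height reached at the end of a path: number of up steps minus number of
down steps. -/
def height (w : List Step) : ℤ := (w.count Step.U : ℤ) - (w.count Step.D : ℤ)

/-- Expansion of a Schröder word into unit-width letters: each double horizontal step
`H = (2,0)` is replaced by two unit horizontal letters, so that position `x` in the
expanded word corresponds to abscissa `x` of the path. -/
def expand (w : List Step) : List Step :=
  w.flatMap fun s => match s with
    | Step.H => [Step.H, Step.H]
    | s => [s]

/-- The height of the path `w` at the integer abscissa `x`. -/
def heightAt (w : List Step) (x : ℕ) : ℤ := height ((expand w).take x)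

/-- A Schröder path of semilength `n`: a word over `{U, D, H}` with equally many `U`'s
and `D`'s, with (number of `U`'s) + (number of `H`'s) equal to `n`, all of whose
prefixes contain at least as many `U`'s as `D`'s. -/
def IsSchroder (n : ℕ) (w : List Step) : Prop :=
  w.count Step.U = w.count Step.D ∧ w.count Step.U + w.count Step.H = n ∧
    ∀ i : ℕ, 0 ≤ height (w.take i)

/-- A Grand Schröder path of semilength `n`: a word over `{U, D, H}` with equally many
`U`'s and `D`'s, with (number of `U`'s) + (number of `H`'s) equal to `n`. -/
def IsGrandSchroder (n : ℕ) (w : List Step) : Prop :=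
  w.count Step.U = w.count Step.D ∧ w.count Step.U + w.count Step.H = n

/-- The order on (Grand) Schröder paths: pointwise comparison of heights at every
integer abscissa. -/
def PathLe (w w' : List Step) : Prop :=
  ∀ x : ℕ, heightAt w x ≤ heightAt w' x

/-- Strict order on paths. -/
def PathLt (w w' : List Step) : Prop := PathLe w w' ∧ ¬ PathLe w' w

/-- `Covers P w w'` : within the class of paths satisfying `P`, the path `w'` covers `w`,
i.e. `w < w'` and no path of the class lies strictly between them. -/
def Covers (P : List Step → Prop) (w w' : List Step) : Prop :=
  P w ∧ P w' ∧ PathLt w w' ∧ ∀ z : List Step, P z → ¬ (PathLt w z ∧ PathLt z w')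

/-- Number of occurrences in `w` of an `x` step immediately followed by a `y` step. -/
def countFactor (x y : Step) (w : List Step) : ℕ :=
  ((Finset.range w.length).filter
    (fun i => w[i]? = some x ∧ w[i + 1]? = some y)).card

/-- Number of horizontal steps of `w` at height at least `1` (the height of a step being
the height of the path at its starting abscissa). -/
def countHighH (w : List Step) : ℕ :=
  ((Finset.range w.length).filter
    (fun i => w[i]? = some Step.H ∧ 1 ≤ height (w.take i))).card

/-- The number of edges of the Hasse diagram of the Schröder lattice `S_n`,
i.e. the number of covering pairs of Schröder paths of semilength `n`. -/
noncomputable def schroderEdges (n : ℕ) : ℕ :=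
  Nat.card {p : List Step × List Step // Covers (IsSchroder n) p.1 p.2}

/-- The number of edges of the Hasse diagram of the Grand Schröder lattice `GS_n`. -/
noncomputable def grandSchroderEdges (n : ℕ) : ℕ :=
  Nat.card {p : List Step × List Step // Covers (IsGrandSchroder n) p.1 p.2}

/-- The `n`-th large Schröder number: the number of Schröder paths of semilength `n`. -/
noncomputable def schroderNum (n : ℕ) : ℕ :=
  Nat.card {w : List Step // IsSchroder n w}

/-- The `n`-th central Delannoy number: the number of Grand Schröder paths of
semilength `n`. -/
noncomputable def delannoyNum (n : ℕ) : ℕ :=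
  Nat.card {w : List Step // IsGrandSchroder n w}

-- Section 0: compatibility
namespace List

def get? {α : Type} (l : List α) (i : ℕ) : Option α := l[i]?

@[simp] theorem get?_eq_getElem? {α : Type} (l : List α) (i : ℕ) : l.get? i = l[i]? := rfl

theorem get?_eq_get {α : Type} {l : List α} {n : ℕ} (h : n < l.length) :
    l.get? n = some (l.get ⟨n, h⟩) := by simp [h]

theorem get?_eq_none {α : Type} {l : List α} {n : ℕ} : l.get? n = none ↔ l.length ≤ n := by
  simp

theorem get?_eq_some {α : Type} {l : List α} {n : ℕ} {a : α} :
    l.get? n = some a ↔ ∃ h, l.get ⟨n, h⟩ = a := by simp [List.getElem?_eq_some_iff]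

theorem ext_get? {α : Type} {l₁ l₂ : List α} (h : ∀ n, l₁.get? n = l₂.get? n) : l₁ = l₂ :=
  List.ext_getElem? (by simpa using h)

theorem get?_append_right {α : Type} {l₁ l₂ : List α} {n : ℕ} (h : l₁.length ≤ n) :
    (l₁ ++ l₂).get? n = l₂.get? (n - l₁.length) := by
  simp [List.getElem?_append_right h]

theorem get?_append {α : Type} {l₁ l₂ : List α} {n : ℕ} (hn : n < l₁.length) :
    (l₁ ++ l₂).get? n = l₁.get? n := by
  simp [List.getElem?_append_left hn]

theorem drop_eq_get_cons {α : Type} {n : ℕ} {l : List α} (h : n < l.length) :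
    l.drop n = l.get ⟨n, h⟩ :: l.drop (n + 1) := by
  exact List.drop_eq_getElem_cons h

end List

-- Section 1: basics
namespace SchroderProof

open Step

/-- signed value of a step -/
def sval : Step → ℤ
  | Step.U => 1
  | Step.D => -1
  | Step.H => 0

lemma sval_inj : Function.Injective sval := by
  intro a b h
  cases a <;> cases b <;> simp_all [sval]

lemma height_append (a b : List Step) : height (a ++ b) = height a + height b := by
  simp [height, List.count_append]; ring

@[simp] lemma height_nil : height [] = 0 := by simp [height]

lemma height_cons (c : Step) (w : List Step) : height (c :: w) = sval c + height w := by
  cases c <;> simp [height, sval, List.count_cons] <;> ring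

@[simp] lemma expand_nil : expand [] = [] := rfl

lemma expand_cons (c : Step) (w : List Step) :
    expand (c :: w) = (match c with | Step.H => [Step.H, Step.H] | c => [c]) ++ expand w := by
  simp [expand]

lemma expand_append (a b : List Step) : expand (a ++ b) = expand a ++ expand b := by
  simp [expand]

lemma length_expand (w : List Step) :
    (expand w).length = w.length + w.count Step.H := by
  induction w with
  | nil => simp
  | cons c w ih =>
    cases c <;> simp [expand_cons, ih, List.count_cons] <;> omega

lemma count_expand_U (w : List Step) : (expand w).count Step.U = w.count Step.U := by
  induction w with
  | nil => simp
  | cons c w ih => cases c <;> simp [expand_cons, List.count_append, List.count_cons, ih]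

lemma count_expand_D (w : List Step) : (expand w).count Step.D = w.count Step.D := by
  induction w with
  | nil => simp
  | cons c w ih => cases c <;> simp [expand_cons, List.count_append, List.count_cons, ih]

lemma height_expand (w : List Step) : height (expand w) = height w := by
  simp [height, count_expand_U, count_expand_D]

lemma heightAt_zero (w : List Step) : heightAt w 0 = 0 := by simp [heightAt]

lemma heightAt_of_length_le (w : List Step) (x : ℕ) (h : (expand w).length ≤ x) :
    heightAt w x = height w := by
  rw [heightAt, List.take_of_length_le h, height_expand]

/-- optional sval -/
def svalo : Option Step → ℤ
  | none => 0
  | some c => sval c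

lemma heightAt_succ (w : List Step) (x : ℕ) :
    heightAt w (x + 1) = heightAt w x + svalo ((expand w).get? x) := by
  rcases lt_or_ge x (expand w).length with h | h
  · obtain ⟨c, hc⟩ : ∃ c, (expand w).get? x = some c := ⟨_, List.get?_eq_get h⟩
    have hc' : (expand w)[x]? = some c := by rwa [← List.get?_eq_getElem?]
    rw [heightAt, heightAt, List.take_succ, height_append, hc', hc]
    simp [svalo, height_cons]
  · rw [List.get?_eq_none.2 h, heightAt_of_length_le w _ h,
      heightAt_of_length_le w _ (by omega)]
    simp [svalo]

lemma svalo_le_one (o : Option Step) : svalo o ≤ 1 := by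
  rcases o with _ | c
  · simp [svalo]
  · cases c <;> simp [svalo, sval]

lemma neg_one_le_svalo (o : Option Step) : -1 ≤ svalo o := by
  rcases o with _ | c
  · simp [svalo]
  · cases c <;> simp [svalo, sval]

lemma heightAt_succ_le (w : List Step) (x : ℕ) :
    heightAt w (x + 1) ≤ heightAt w x + 1 := by
  rw [heightAt_succ]; have := svalo_le_one ((expand w).get? x); omega

lemma heightAt_le_succ (w : List Step) (x : ℕ) :
    heightAt w x - 1 ≤ heightAt w (x + 1) := by
  rw [heightAt_succ]; have := neg_one_le_svalo ((expand w).get? x); omega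

end SchroderProof

-- Section 2: positions and letters
namespace SchroderProof

/-- the expansion of a single letter -/
def expansion : Step → List Step
  | Step.H => [Step.H, Step.H]
  | c => [c]

lemma expand_cons' (c : Step) (w : List Step) :
    expand (c :: w) = expansion c ++ expand w := by
  cases c <;> simp [expand_cons, expansion]

@[simp] lemma expansion_length_pos (c : Step) : 0 < (expansion c).length := by
  cases c <;> simp [expansion]

lemma expansion_head (c : Step) : (expansion c).get? 0 = some c := by
  cases c <;> rfl

/-- position in the expanded word of the start of letter `i` -/
def epos (w : List Step) (i : ℕ) : ℕ := (expand (w.take i)).length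

@[simp] lemma epos_zero (w : List Step) : epos w 0 = 0 := by simp [epos]

lemma decomp_of_get? {w : List Step} {i : ℕ} {c : Step} (h : w.get? i = some c) :
    w = w.take i ++ c :: w.drop (i + 1) := by
  have hi : i < w.length := List.get?_eq_some.1 h |>.1
  conv_lhs => rw [← List.take_append_drop i w]
  congr 1
  rw [List.drop_eq_get_cons hi]
  congr 1
  have := List.get?_eq_get hi
  rw [h] at this
  exact (Option.some_injective _ this.symm)

lemma expand_decomp {w : List Step} {i : ℕ} {c : Step} (h : w.get? i = some c) :
    expand w = expand (w.take i) ++ expansion c ++ expand (w.drop (i + 1)) := by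
  conv_lhs => rw [decomp_of_get? h]
  rw [expand_append, expand_cons']
  simp

lemma take_length_of_get? {w : List Step} {i : ℕ} {c : Step} (h : w.get? i = some c) :
    (w.take i).length = i := by
  have hi : i < w.length := List.get?_eq_some.1 h |>.1
  simp [List.length_take]; omega

lemma epos_succ {w : List Step} {i : ℕ} {c : Step} (h : w.get? i = some c) :
    epos w (i + 1) = epos w i + (expansion c).length := by
  have hi : i < w.length := List.get?_eq_some.1 h |>.1
  have : w.take (i+1) = w.take i ++ [c] := by
    rw [List.take_succ]
    have : w[i]? = some c := by rwa [← List.get?_eq_getElem?]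
    rw [this]; rfl
  rw [epos, this, expand_append, List.length_append, ← epos]
  cases c <;> simp [expansion, expand]

lemma epos_le_succ (w : List Step) (i : ℕ) : epos w i ≤ epos w (i + 1) := by
  rcases h : w.get? i with _ | c
  · have : w.length ≤ i := List.get?_eq_none.1 h
    unfold epos
    rw [List.take_of_length_le this, List.take_of_length_le (by omega)]
  · rw [epos_succ h]; omega

lemma epos_mono (w : List Step) : Monotone (epos w) := by
  apply monotone_nat_of_le_succ
  exact epos_le_succ w

lemma epos_strict {w : List Step} {i : ℕ} (hi : i < w.length) :
    epos w i < epos w (i + 1) := by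
  obtain ⟨c, hc⟩ : ∃ c, w.get? i = some c := ⟨w.get ⟨i, hi⟩, List.get?_eq_get hi⟩
  rw [epos_succ hc]
  have := expansion_length_pos c
  omega

lemma epos_length (w : List Step) : epos w w.length = (expand w).length := by
  simp [epos]

lemma epos_inj {w : List Step} {i j : ℕ} (hi : i < w.length) (hj : j < w.length)
    (h : epos w i = epos w j) : i = j := by
  rcases lt_trichotomy i j with hlt | he | hlt
  · have h1 := epos_strict hi
    have h2 := epos_mono w (show i + 1 ≤ j by omega)
    omega
  · exact he
  · have h1 := epos_strict hj
    have h2 := epos_mono w (show j + 1 ≤ i by omega)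
    omega

lemma heightAt_epos (w : List Step) (i : ℕ) :
    heightAt w (epos w i) = height (w.take i) := by
  have : expand w = expand (w.take i) ++ expand (w.drop i) := by
    rw [← expand_append, List.take_append_drop]
  rw [heightAt, this, epos, List.take_left, height_expand]

lemma get?_expand_epos {w : List Step} {i : ℕ} {c : Step} (h : w.get? i = some c) :
    (expand w).get? (epos w i) = some c := by
  rw [expand_decomp h, List.append_assoc]
  simp only [epos]
  rw [List.get?_append_right le_rfl, Nat.sub_self]
  rw [List.get?_append (by simpa using expansion_length_pos c)]
  exact expansion_head c

lemma get?_expand_epos_H {w : List Step} {i : ℕ} (h : w.get? i = some Step.H) :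
    (expand w).get? (epos w i + 1) = some Step.H := by
  rw [expand_decomp h, List.append_assoc]
  simp only [epos]
  rw [List.get?_append_right (by omega)]
  have : (expand (w.take i)).length + 1 - (expand (w.take i)).length = 1 := by omega
  rw [this, List.get?_append (by simp [expansion])]
  rfl

lemma epos_lt_length {w : List Step} {i : ℕ} (hi : i < w.length) :
    epos w i < (expand w).length := by
  calc epos w i < epos w (i+1) := epos_strict hi
  _ ≤ epos w w.length := epos_mono w (by omega)
  _ = (expand w).length := epos_length w

/-- a letter starts at expanded position `t < L` iff ... : the head letter -/
lemma letter_head {w : List Step} {i t : ℕ} (he : epos w i = t)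
    (ht : t < (expand w).length) : ∃ c, w.get? i = some c ∧ (expand w).get? t = some c := by
  have hi : i < w.length := by
    by_contra hge
    push_neg at hge
    have : epos w i = (expand w).length := by
      unfold epos; rw [List.take_of_length_le hge]
    omega
  obtain ⟨c, hc⟩ : ∃ c, w.get? i = some c := ⟨w.get ⟨i, hi⟩, List.get?_eq_get hi⟩
  exact ⟨c, hc, he ▸ get?_expand_epos hc⟩

end SchroderProof

-- Section 3: expansion injectivity, determination, letters at units, parity
namespace SchroderProof

lemma epos_cons (c : Step) (w : List Step) (i : ℕ) :
    epos (c :: w) (i + 1) = (expansion c).length + epos w i := by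
  simp only [epos, List.take_succ_cons, expand_cons', List.length_append]

lemma expand_inj : ∀ {w z : List Step}, expand w = expand z → w = z := by
  intro w
  induction w with
  | nil =>
    intro z h
    cases z with
    | nil => rfl
    | cons c z' =>
      exfalso
      have h2 := congrArg List.length h
      rw [length_expand, length_expand] at h2
      simp at h2
      omega
  | cons c w' ih =>
    intro z h
    cases z with
    | nil =>
      exfalso
      have h2 := congrArg List.length h
      rw [length_expand, length_expand] at h2
      simp at h2
    | cons d z' =>
      rw [expand_cons', expand_cons'] at h
      have hhead : c = d := by
        have h0 := congrArg (fun l => l.get? 0) h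
        rw [List.get?_append (by simpa using expansion_length_pos c),
          List.get?_append (by simpa using expansion_length_pos d),
          expansion_head, expansion_head] at h0
        exact Option.some_injective _ h0
      subst hhead
      have : expand w' = expand z' := by
        cases c <;> simpa [expansion] using h
      rw [ih this]

lemma get?_expand_eq_of_heights {w z : List Step}
    (hl : (expand w).length = (expand z).length)
    (h : ∀ x, heightAt w x = heightAt z x) (t : ℕ) :
    (expand w).get? t = (expand z).get? t := by
  rcases lt_or_ge t (expand w).length with ht | ht
  · obtain ⟨c, hc⟩ : ∃ c, (expand w).get? t = some c :=
      ⟨_, List.get?_eq_get ht⟩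
    obtain ⟨d, hd⟩ : ∃ d, (expand z).get? t = some d :=
      ⟨_, List.get?_eq_get (by omega)⟩
    have h1 := heightAt_succ w t
    have h2 := heightAt_succ z t
    rw [hc] at h1; rw [hd] at h2
    rw [h t, h (t+1)] at h1
    have : sval c = sval d := by
      simp only [svalo] at h1 h2
      omega
    rw [hc, hd, sval_inj this]
  · rw [List.get?_eq_none.2 ht, List.get?_eq_none.2 (by omega)]

lemma eq_of_heights {w z : List Step}
    (hl : (expand w).length = (expand z).length)
    (h : ∀ x, heightAt w x = heightAt z x) : w = z :=
  expand_inj (List.ext_get? (get?_expand_eq_of_heights hl h))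

lemma count_total (w : List Step) :
    w.length = w.count Step.U + w.count Step.D + w.count Step.H := by
  induction w with
  | nil => simp
  | cons c w ih => cases c <;> simp [List.count_cons, ih] <;> omega

lemma length_expand_gs {n : ℕ} {w : List Step} (h : IsGrandSchroder n w) :
    (expand w).length = 2 * n := by
  obtain ⟨h1, h2⟩ := h
  have := count_total w
  rw [length_expand]
  omega

lemma height_gs {n : ℕ} {w : List Step} (h : IsGrandSchroder n w) : height w = 0 := by
  rw [height, h.1]; ring

lemma heightAt_cons_single {c : Step} (hc : c ≠ Step.H) (w : List Step) (x : ℕ) :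
    heightAt (c :: w) (x + 1) = sval c + heightAt w x := by
  have : expansion c = [c] := by cases c <;> simp_all [expansion]
  rw [heightAt, expand_cons', this]
  simp only [List.cons_append, List.nil_append, List.take_succ_cons, height_cons]
  rfl

lemma heightAt_cons_H (w : List Step) (x : ℕ) :
    heightAt (Step.H :: w) (x + 2) = heightAt w x := by
  rw [heightAt, expand_cons']
  show height (Step.H :: Step.H :: (expand w).take x) = _
  rw [height_cons, height_cons]
  simp [sval, heightAt]

lemma heightAt_cons_H1 (w : List Step) : heightAt (Step.H :: w) 1 = 0 := by
  rw [heightAt, expand_cons']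
  show height [Step.H] = 0
  simp [height]

lemma exists_take_height (w : List Step) : ∀ x, ∃ i, heightAt w x = height (w.take i) := by
  induction w with
  | nil =>
    intro x
    exact ⟨0, by simp [heightAt, expand_nil]⟩
  | cons c w' ih =>
    intro x
    match x with
    | 0 => exact ⟨0, by simp [heightAt_zero]⟩
    | Nat.succ x' =>
      by_cases hc : c = Step.H
      · subst hc
        match x' with
        | 0 => exact ⟨0, by simp [heightAt_cons_H1]⟩
        | Nat.succ x'' =>
          obtain ⟨i, hi⟩ := ih x''
          refine ⟨i + 1, ?_⟩
          show heightAt (Step.H :: w') (x'' + 2) = _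
          rw [heightAt_cons_H, hi, List.take_succ_cons, height_cons]
          simp [sval]
      · obtain ⟨i, hi⟩ := ih x'
        refine ⟨i + 1, ?_⟩
        rw [heightAt_cons_single hc, hi, List.take_succ_cons, height_cons]

lemma nonneg_iff (w : List Step) :
    (∀ i : ℕ, 0 ≤ height (w.take i)) ↔ (∀ x : ℕ, 0 ≤ heightAt w x) := by
  constructor
  · intro h x
    obtain ⟨i, hi⟩ := exists_take_height w x
    rw [hi]; exact h i
  · intro h i
    rw [← heightAt_epos]
    exact h _

lemma unit_letter {c : Step} (hc : c ≠ Step.H) :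
    ∀ {w : List Step} {t : ℕ}, (expand w).get? t = some c →
      ∃ i, w.get? i = some c ∧ epos w i = t := by
  intro w
  induction w with
  | nil => intro t h; simp [expand_nil] at h
  | cons d w' ih =>
    intro t h
    rw [expand_cons'] at h
    by_cases hd : d = Step.H
    · subst hd
      match t with
      | 0 => simp [expansion] at h; exact absurd h.symm hc
      | 1 => simp [expansion] at h; exact absurd h.symm hc
      | Nat.succ (Nat.succ t') =>
        rw [List.get?_append_right (by simp [expansion])] at h
        simp only [expansion, List.length_cons, List.length_nil] at h
        have h' : (expand w').get? t' = some c := by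
          convert h using 2; omega
        obtain ⟨i, hi1, hi2⟩ := ih h' 
        exact ⟨i + 1, by simpa using hi1, by rw [epos_cons]; simp [expansion]; omega⟩
    · have hexp : expansion d = [d] := by cases d <;> simp_all [expansion]
      rw [hexp] at h
      match t with
      | 0 =>
        simp at h
        exact ⟨0, by simp [h], by simp⟩
      | Nat.succ t' =>
        rw [List.get?_append_right (by simp)] at h
        have h' : (expand w').get? t' = some c := by
          convert h using 2; simp only [List.length_singleton]; omega
        obtain ⟨i, hi1, hi2⟩ := ih h'
        exact ⟨i + 1, by simpa using hi1, by rw [epos_cons, hexp]; simp; omega⟩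
        

lemma flat_even :
    ∀ {w : List Step} {a t : ℕ}, a ≤ t →
      (∀ s, a ≤ s → s ≤ t → (expand w).get? s = some Step.H) →
      (a = 0 ∨ (expand w).get? (a - 1) ≠ some Step.H) →
      Even (t - a) →
      ∃ i, w.get? i = some Step.H ∧ epos w i = t := by
  intro w
  induction w with
  | nil =>
    intro a t hat hrun _ _
    have := hrun a le_rfl hat
    simp [expand_nil] at this
  | cons d w' ih =>
    intro a t hat hrun hbd hev
    by_cases hd : d = Step.H
    · subst hd
      have hexp : expand (Step.H :: w') = Step.H :: Step.H :: expand w' := by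
        rw [expand_cons']; rfl
      match a, t with
      | 0, 0 => exact ⟨0, rfl, by simp⟩
      | 0, 1 => exact absurd hev (by decide)
      | 0, Nat.succ (Nat.succ t') =>
        obtain ⟨i, h1, h2⟩ := ih (a := 0) (t := t') (by omega)
          (fun s hs hst => by
            have := hrun (s + 2) (by omega) (by omega)
            rwa [hexp] at this)
          (Or.inl rfl)
          (by
            rcases hev with ⟨k, hk⟩
            exact ⟨k - 1, by omega⟩)
        exact ⟨i + 1, by simpa using h1, by rw [epos_cons]; simp [expansion]; omega⟩
      | 1, _ =>
        exfalso
        rcases hbd with h | h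
        · omega
        · exact h (by rw [hexp]; rfl)
      | Nat.succ (Nat.succ a'), t =>
        have hat' : a' ≤ t - 2 := by omega
        obtain ⟨i, h1, h2⟩ := ih (a := a') (t := t - 2) hat'
          (fun s hs hst => by
            have := hrun (s + 2) (by omega) (by omega)
            rwa [hexp] at this)
          (by
            rcases hbd with h | h
            · omega
            · match a' with
              | 0 => exact Or.inl rfl
              | Nat.succ a'' =>
                refine Or.inr ?_
                intro hcon
                apply h
                rw [hexp]
                simpa using hcon)
          (by
            rcases hev with ⟨k, hk⟩
            exact ⟨k, by omega⟩)
        refine ⟨i + 1, by simpa using h1, ?_⟩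
        rw [epos_cons]
        simp [expansion]
        omega
    · have hexp : expansion d = [d] := by cases d <;> simp_all [expansion]
      have hexp2 : expand (d :: w') = d :: expand w' := by rw [expand_cons', hexp]; rfl
      match a, t with
      | 0, t =>
        exfalso
        have := hrun 0 le_rfl (by omega)
        rw [hexp2] at this
        simp at this
        exact hd this
      | Nat.succ a', t =>
        have ht : 1 ≤ t := by omega
        obtain ⟨i, h1, h2⟩ := ih (a := a') (t := t - 1) (by omega)
          (fun s hs hst => by
            have := hrun (s + 1) (by omega) (by omega)
            rwa [hexp2] at this)
          (by
            rcases hbd with h | h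
            · omega
            · match a' with
              | 0 => exact Or.inl rfl
              | Nat.succ a'' =>
                refine Or.inr ?_
                intro hcon
                apply h
                rw [hexp2]
                simpa using hcon)
          (by
            rcases hev with ⟨k, hk⟩
            exact ⟨k, by omega⟩)
        refine ⟨i + 1, by simpa using h1, ?_⟩
        rw [epos_cons, hexp]
        simp
        omega

lemma flat_odd {w : List Step} {a b : ℕ} (hab : a ≤ b)
    (hrun : ∀ s, a ≤ s → s < b → (expand w).get? s = some Step.H)
    (hbd : a = 0 ∨ (expand w).get? (a - 1) ≠ some Step.H)
    (hodd : ¬ Even (b - a)) :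
    (expand w).get? b = some Step.H := by
  have hb : a + 1 ≤ b := by
    rcases Nat.eq_or_lt_of_le hab with h | h
    · exfalso; apply hodd; simp [h]
    · omega
  obtain ⟨i, h1, h2⟩ := flat_even (w := w) (a := a) (t := b - 1) (by omega)
    (fun s hs hst => hrun s hs (by omega))
    hbd
    (by
      rcases Nat.even_or_odd (b - a) with h | h
      · exact absurd h hodd
      · rcases h with ⟨k, hk⟩
        exact ⟨k, by omega⟩)
  have := get?_expand_epos_H h1
  rw [h2] at this
  rwa [show b - 1 + 1 = b by omega] at this

end SchroderProof

-- Section 4: the local moves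
namespace SchroderProof

/-- replace letter `i` (an `H`) by `U D` -/
def repUD (w : List Step) (i : ℕ) : List Step :=
  w.take i ++ Step.U :: Step.D :: w.drop (i + 1)

/-- replace letter `i` (an `H`) by `D U` -/
def repDU (w : List Step) (i : ℕ) : List Step :=
  w.take i ++ Step.D :: Step.U :: w.drop (i + 1)

/-- replace letters `i, i+1` (a `DU` or `UD`) by `H` -/
def repH2 (w : List Step) (i : ℕ) : List Step :=
  w.take i ++ Step.H :: w.drop (i + 2)

/-- the raising relation -/
def RaiseRel (w w' : List Step) : Prop :=
  (∃ i, w.get? i = some Step.H ∧ w' = repUD w i) ∨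
  (∃ i, w.get? i = some Step.D ∧ w.get? (i + 1) = some Step.U ∧ w' = repH2 w i)

lemma dcmp2 {w : List Step} {i : ℕ} {c d : Step}
    (hc : w.get? i = some c) (hd : w.get? (i + 1) = some d) :
    w = w.take i ++ c :: d :: w.drop (i + 2) := by
  have h1 := decomp_of_get? hc
  have h2 := decomp_of_get? hd
  have hi1 : i + 1 < w.length := List.get?_eq_some.1 hd |>.1
  have : w.drop (i + 1) = d :: w.drop (i + 2) := by
    rw [List.drop_eq_getElem_cons hi1]
    congr 1
    have := List.get?_eq_get hi1
    rw [hd] at this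
    exact (Option.some_injective _ this.symm)
  rw [this] at h1
  exact h1

lemma height_take_step (c : Step) (j : ℕ) :
    height ((match c with | Step.H => [Step.H, Step.H] | c => [c]) : List Step) = sval c := by
  cases c <;> simp [height, sval]

lemma heightAt_decomp {w A M B : List Step} (h : expand w = A ++ M ++ B) (x : ℕ) :
    heightAt w x = height (A.take x) + height (M.take (x - A.length))
      + height (B.take (x - A.length - M.length)) := by
  rw [heightAt, h, List.take_append, List.take_append,
    height_append, height_append, List.length_append]
  have : x - (A.length + M.length) = x - A.length - M.length := by omega
  rw [this]

lemma height_rep_core {w w' A M M' B : List Step} {d : ℤ}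
    (hw : expand w = A ++ M ++ B) (hw' : expand w' = A ++ M' ++ B)
    (hlen : M.length = M'.length)
    (hdiff : ∀ j : ℕ, height (M'.take j) = height (M.take j) + (if j = 1 then d else 0))
    (x : ℕ) :
    heightAt w' x = heightAt w x + (if x = A.length + 1 then d else 0) := by
  rw [heightAt_decomp hw, heightAt_decomp hw', hdiff (x - A.length), hlen]
  by_cases hx : x = A.length + 1
  · rw [if_pos hx, if_pos (by omega)]; ring
  · rw [if_neg hx, if_neg (by omega)]; ring

lemma expand_repUD {w : List Step} {i : ℕ} (h : w.get? i = some Step.H) :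
    expand (repUD w i) =
      expand (w.take i) ++ [Step.U, Step.D] ++ expand (w.drop (i + 1)) := by
  rw [repUD]
  rw [show w.take i ++ Step.U :: Step.D :: w.drop (i+1)
      = w.take i ++ [Step.U, Step.D] ++ w.drop (i+1) by simp]
  rw [expand_append, expand_append]
  rfl

lemma expand_repDU {w : List Step} {i : ℕ} (h : w.get? i = some Step.H) :
    expand (repDU w i) =
      expand (w.take i) ++ [Step.D, Step.U] ++ expand (w.drop (i + 1)) := by
  rw [repDU]
  rw [show w.take i ++ Step.D :: Step.U :: w.drop (i+1)
      = w.take i ++ [Step.D, Step.U] ++ w.drop (i+1) by simp]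
  rw [expand_append, expand_append]
  rfl

lemma expand_repH2 {w : List Step} {i : ℕ} :
    expand (repH2 w i) =
      expand (w.take i) ++ [Step.H, Step.H] ++ expand (w.drop (i + 2)) := by
  rw [repH2]
  rw [show w.take i ++ Step.H :: w.drop (i+2)
      = w.take i ++ [Step.H] ++ w.drop (i+2) by simp]
  rw [expand_append, expand_append]
  rfl

lemma expand_decompH {w : List Step} {i : ℕ} (h : w.get? i = some Step.H) :
    expand w = expand (w.take i) ++ [Step.H, Step.H] ++ expand (w.drop (i + 1)) :=
  expand_decomp h

lemma expand_decomp2 {w : List Step} {i : ℕ} {c d : Step}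
    (hc : w.get? i = some c) (hd : w.get? (i + 1) = some d)
    (hcH : c ≠ Step.H) (hdH : d ≠ Step.H) :
    expand w = expand (w.take i) ++ [c, d] ++ expand (w.drop (i + 2)) := by
  conv_lhs => rw [dcmp2 hc hd]
  rw [show w.take i ++ c :: d :: w.drop (i+2) = w.take i ++ [c, d] ++ w.drop (i+2) by simp]
  rw [expand_append, expand_append]
  congr 1
  congr 1
  cases c <;> cases d <;> simp_all [expand, expansion]

lemma height_repUD {w : List Step} {i : ℕ} (h : w.get? i = some Step.H) (x : ℕ) :
    heightAt (repUD w i) x = heightAt w x + (if x = epos w i + 1 then 1 else 0) := by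
  have := height_rep_core (d := 1) (expand_decompH h) (expand_repUD h) (by simp)
    (fun j => by
      match j with
      | 0 => simp
      | 1 => simp [height]
      | (j+2) =>
        rw [List.take_of_length_le (by simp), List.take_of_length_le (by simp)]
        simp [height])
    x
  rw [this]
  rfl

lemma height_repH2 {w : List Step} {i : ℕ}
    (hc : w.get? i = some Step.D) (hd : w.get? (i + 1) = some Step.U) (x : ℕ) :
    heightAt (repH2 w i) x = heightAt w x + (if x = epos w i + 1 then 1 else 0) := by
  have := height_rep_core (d := 1)
    (expand_decomp2 hc hd (by simp) (by simp)) (expand_repH2 (w := w) (i := i)) (by simp)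
    (fun j => by
      match j with
      | 0 => simp
      | 1 => simp [height]
      | (j+2) =>
        rw [List.take_of_length_le (by simp), List.take_of_length_le (by simp)]
        simp [height])
    x
  rw [this]
  rfl

lemma height_repDU {w : List Step} {i : ℕ} (h : w.get? i = some Step.H) (x : ℕ) :
    heightAt (repDU w i) x = heightAt w x + (if x = epos w i + 1 then -1 else 0) := by
  have := height_rep_core (d := -1) (expand_decompH h) (expand_repDU h) (by simp)
    (fun j => by
      match j with
      | 0 => simp
      | 1 => simp [height]
      | (j+2) =>
        rw [List.take_of_length_le (by simp), List.take_of_length_le (by simp)]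
        simp [height])
    x
  rw [this]
  rfl

lemma height_repH2' {w : List Step} {i : ℕ}
    (hc : w.get? i = some Step.U) (hd : w.get? (i + 1) = some Step.D) (x : ℕ) :
    heightAt (repH2 w i) x = heightAt w x + (if x = epos w i + 1 then -1 else 0) := by
  have := height_rep_core (d := -1)
    (expand_decomp2 hc hd (by simp) (by simp)) (expand_repH2 (w := w) (i := i)) (by simp)
    (fun j => by
      match j with
      | 0 => simp
      | 1 => simp [height]
      | (j+2) =>
        rw [List.take_of_length_le (by simp), List.take_of_length_le (by simp)]
        simp [height])
    x
  rw [this]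
  rfl

-- counts
lemma counts_repUD {w : List Step} {i : ℕ} (h : w.get? i = some Step.H) :
    (repUD w i).count Step.U = w.count Step.U + 1 ∧
    (repUD w i).count Step.D = w.count Step.D + 1 ∧
    (repUD w i).count Step.H + 1 = w.count Step.H := by
  have hw := decomp_of_get? h
  refine ⟨?_, ?_, ?_⟩ <;>
  · conv_rhs => rw [hw]
    simp [repUD, List.count_append, List.count_cons]
    omega

lemma counts_repDU {w : List Step} {i : ℕ} (h : w.get? i = some Step.H) :
    (repDU w i).count Step.U = w.count Step.U + 1 ∧
    (repDU w i).count Step.D = w.count Step.D + 1 ∧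
    (repDU w i).count Step.H + 1 = w.count Step.H := by
  have hw := decomp_of_get? h
  refine ⟨?_, ?_, ?_⟩ <;>
  · conv_rhs => rw [hw]
    simp [repDU, List.count_append, List.count_cons]
    omega

lemma counts_repH2 {w : List Step} {i : ℕ} {c d : Step}
    (hc : w.get? i = some c) (hd : w.get? (i + 1) = some d)
    (hcd : (c = Step.D ∧ d = Step.U) ∨ (c = Step.U ∧ d = Step.D)) :
    (repH2 w i).count Step.U + 1 = w.count Step.U ∧
    (repH2 w i).count Step.D + 1 = w.count Step.D ∧
    (repH2 w i).count Step.H = w.count Step.H + 1 := by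
  have hw := dcmp2 hc hd
  rcases hcd with ⟨h1, h2⟩ | ⟨h1, h2⟩ <;> subst h1 <;> subst h2 <;>
  · refine ⟨?_, ?_, ?_⟩ <;>
    · conv_rhs => rw [hw]
      simp [repH2, List.count_append, List.count_cons]
      omega

lemma grand_repUD {n : ℕ} {w : List Step} {i : ℕ} (hg : IsGrandSchroder n w)
    (h : w.get? i = some Step.H) : IsGrandSchroder n (repUD w i) := by
  obtain ⟨c1, c2, c3⟩ := counts_repUD h
  obtain ⟨g1, g2⟩ := hg
  exact ⟨by omega, by omega⟩

lemma grand_repH2 {n : ℕ} {w : List Step} {i : ℕ} {c d : Step} (hg : IsGrandSchroder n w)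
    (hc : w.get? i = some c) (hd : w.get? (i + 1) = some d)
    (hcd : (c = Step.D ∧ d = Step.U) ∨ (c = Step.U ∧ d = Step.D)) :
    IsGrandSchroder n (repH2 w i) := by
  obtain ⟨c1, c2, c3⟩ := counts_repH2 hc hd hcd
  obtain ⟨g1, g2⟩ := hg
  exact ⟨by omega, by omega⟩

lemma grand_repDU {n : ℕ} {w : List Step} {i : ℕ} (hg : IsGrandSchroder n w)
    (h : w.get? i = some Step.H) : IsGrandSchroder n (repDU w i) := by
  obtain ⟨c1, c2, c3⟩ := counts_repDU h
  obtain ⟨g1, g2⟩ := hg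
  exact ⟨by omega, by omega⟩

end SchroderProof

-- Section 5: the key lemma
namespace SchroderProof

lemma slope_eq {w : List Step} {s : ℕ} {c : Step} (h : (expand w).get? s = some c) :
    heightAt w (s + 1) = heightAt w s + sval c := by
  rw [heightAt_succ, h]; rfl

lemma get?_eq_of_slope {w : List Step} {s : ℕ} (hs : s < (expand w).length) {c : Step}
    (h : heightAt w (s + 1) = heightAt w s + sval c) :
    (expand w).get? s = some c := by
  obtain ⟨d, hd⟩ : ∃ d, (expand w).get? s = some d := ⟨_, List.get?_eq_get hs⟩
  have := slope_eq hd
  rw [hd]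
  congr 1
  apply sval_inj
  omega

lemma star {n : ℕ} {w z : List Step} (hw : IsGrandSchroder n w) (hz : IsGrandSchroder n z)
    (hle : PathLe w z) (hne : ∃ x, heightAt w x < heightAt z x) :
    ∃ r, RaiseRel w r ∧ PathLe r z := by
  have hLw : (expand w).length = 2 * n := length_expand_gs hw
  have hLz : (expand z).length = 2 * n := length_expand_gs hz
  have hfin : ∀ x, 2 * n ≤ x → heightAt w x = heightAt z x := by
    intro x hx
    rw [heightAt_of_length_le w x (by omega), heightAt_of_length_le z x (by omega),
      height_gs hw, height_gs hz]
  -- the leftmost difference point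
  let x₀ := Nat.find hne
  have Hx : heightAt w x₀ < heightAt z x₀ := Nat.find_spec hne
  have Hmin : ∀ t, t < x₀ → heightAt w t = heightAt z t := by
    intro t ht
    have := Nat.find_min hne ht
    have := hle t
    omega
  have hx0pos : 1 ≤ x₀ := by
    by_contra hcon
    push_neg at hcon
    interval_cases x₀
    · rw [heightAt_zero, heightAt_zero] at Hx; omega
  have hx0lt : x₀ < 2 * n := by
    by_contra hcon
    push_neg at hcon
    have := hfin x₀ hcon
    omega
  obtain ⟨t₀, hx0⟩ : ∃ t, x₀ = t + 1 := ⟨x₀ - 1, by omega⟩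
  -- prefix equality of letters
  have key : ∀ s, s < t₀ → (expand z).get? s = (expand w).get? s := by
    intro s hs
    obtain ⟨c, hc⟩ : ∃ c, (expand w).get? s = some c :=
      ⟨_, List.get?_eq_get (by omega)⟩
    have h1 := slope_eq hc
    rw [Hmin s (by omega), Hmin (s+1) (by omega)] at h1
    rw [hc]
    exact get?_eq_of_slope (by omega) h1
  -- the letter entering x₀
  obtain ⟨e₀, he₀⟩ : ∃ c, (expand w).get? t₀ = some c :=
    ⟨_, List.get?_eq_get (by omega)⟩
  have hslope₀ := slope_eq he₀
  rw [← hx0] at hslope₀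
  obtain ⟨fz₀, hfz₀⟩ : ∃ c, (expand z).get? t₀ = some c :=
    ⟨_, List.get?_eq_get (by omega)⟩
  have hslopez₀ := slope_eq hfz₀
  rw [← hx0] at hslopez₀
  have hmin₀ : heightAt w t₀ = heightAt z t₀ := Hmin t₀ (by omega)
  have he₀ne : e₀ ≠ Step.U := by
    intro h
    subst h
    have := svalo_le_one (some fz₀)
    simp only [svalo] at this
    simp [sval] at hslope₀
    omega
  cases e₀ with
  | U => exact absurd rfl he₀ne
  | H =>
    -- flat case: the H at t₀ must start a letter (first half)
    simp only [sval] at hslope₀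
    have hfz₀U : fz₀ = Step.U := by
      have h1 := svalo_le_one (some fz₀)
      simp only [svalo] at h1
      have : sval fz₀ = 1 := by omega
      cases fz₀ <;> simp_all [sval]
    -- run start for w
    have hPex : ∃ a, ∀ s, s < t₀ + 1 → a ≤ s → (expand w).get? s = some Step.H :=
      ⟨t₀, fun s hs1 hs2 => by
        have : s = t₀ := by omega
        rw [this]; exact he₀⟩
    let a := Nat.find hPex
    have haP : ∀ s, s < t₀ + 1 → a ≤ s → (expand w).get? s = some Step.H :=
      Nat.find_spec hPex
    have hat₀ : a ≤ t₀ := Nat.find_le (fun s hs1 hs2 => by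
      have : s = t₀ := by omega
      rw [this]; exact he₀)
    have hbd : a = 0 ∨ (expand w).get? (a - 1) ≠ some Step.H := by
      rcases Nat.eq_zero_or_pos a with h | h
      · exact Or.inl h
      · right
        intro hcon
        have := Nat.find_min hPex (m := a - 1) (by omega)
        push_neg at this
        obtain ⟨s, hs1, hs2, hs3⟩ := this
        rcases Nat.lt_or_ge s a with hsa | hsa
        · have : s = a - 1 := by omega
          rw [this] at hs3
          exact hs3 hcon
        · exact hs3 (haP s hs1 hsa)
    -- parity from z
    have hzbd : a = 0 ∨ (expand z).get? (a - 1) ≠ some Step.H := by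
      rcases Nat.eq_zero_or_pos a with h0 | h0
      · exact Or.inl h0
      · rcases hbd with h | h
        · exact Or.inl h
        · right
          rw [key (a-1) (by omega)]
          exact h
    have heven : Even (t₀ - a) := by
      by_contra hodd
      have := flat_odd (w := z) (a := a) (b := t₀) hat₀
        (fun s hs1 hs2 => by
          rw [key s hs2]
          exact haP s (by omega) hs1)
        hzbd hodd
      rw [hfz₀] at this
      simp [hfz₀U] at this
    obtain ⟨i, hi1, hi2⟩ := flat_even (w := w) (a := a) (t := t₀) hat₀
      (fun s hs1 hs2 => haP s (by omega) hs1) hbd heven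
    refine ⟨repUD w i, Or.inl ⟨i, hi1, rfl⟩, ?_⟩
    intro x
    rw [height_repUD hi1 x, hi2]
    by_cases hx : x = t₀ + 1
    · rw [if_pos hx, hx, ← hx0]
      omega
    · rw [if_neg hx]
      simpa using hle x
  | D =>
    simp only [sval] at hslope₀
    -- find the end of the descent
    have hQex : ∃ y, x₀ ≤ y ∧ (expand w).get? y ≠ some Step.D :=
      ⟨2 * n, by omega, by rw [List.get?_eq_none.2 (by omega)]; simp⟩
    let y₀ := Nat.find hQex
    have hyQ : x₀ ≤ y₀ ∧ (expand w).get? y₀ ≠ some Step.D := Nat.find_spec hQex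
    have hDrun : ∀ t, t₀ ≤ t → t < y₀ → (expand w).get? t = some Step.D := by
      intro t ht1 ht2
      rcases Nat.eq_or_lt_of_le ht1 with h | h
      · rw [← h]; exact he₀
      · have hmin := Nat.find_min hQex ht2
        push_neg at hmin
        exact hmin (by omega)
    have hylen : y₀ ≤ 2 * n :=
      Nat.find_le ⟨by omega, by rw [List.get?_eq_none.2 (by omega)]; simp⟩
    -- the chain of strict differences
    have hchain0 : ∀ d, x₀ + d ≤ y₀ → heightAt w (x₀ + d) + 1 ≤ heightAt z (x₀ + d) := by
      intro d
      induction d with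
      | zero => intro _; simpa using Hx
      | succ d ih =>
        intro hd
        have h1 := ih (by omega)
        have h2 : (expand w).get? (x₀ + d) = some Step.D := hDrun _ (by omega) (by omega)
        have h3 := slope_eq h2
        simp only [sval] at h3
        have h4 := heightAt_le_succ z (x₀ + d)
        have : x₀ + (d + 1) = (x₀ + d) + 1 := by ring
        rw [this]
        omega
    have hchain : ∀ t, x₀ ≤ t → t ≤ y₀ → heightAt w t + 1 ≤ heightAt z t := by
      intro t h1 h2
      have := hchain0 (t - x₀) (by omega)
      rwa [show x₀ + (t - x₀) = t by omega] at this
    have hylt : y₀ < 2 * n := by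
      rcases Nat.eq_or_lt_of_le hylen with h | h
      · exfalso
        have := hchain y₀ hyQ.1 le_rfl
        have := hfin y₀ (by omega)
        omega
      · exact h
    obtain ⟨e₁, he₁⟩ : ∃ c, (expand w).get? y₀ = some c :=
      ⟨_, List.get?_eq_get (by omega)⟩
    have he₁D : e₁ ≠ Step.D := fun h => hyQ.2 (h ▸ he₁)
    have hprev : (expand w).get? (y₀ - 1) = some Step.D :=
      hDrun (y₀ - 1) (by omega) (by omega)
    cases e₁ with
    | D => exact absurd rfl he₁D
    | U =>
      -- valley: a DU factor
      obtain ⟨i, hi1, hi2⟩ := unit_letter (c := Step.D) (by simp) hprev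
      have hep : epos w (i + 1) = y₀ := by
        rw [epos_succ hi1]
        simp [expansion]
        omega
      obtain ⟨c, hc1, hc2⟩ := letter_head hep (by omega)
      rw [he₁] at hc2
      have hcU : c = Step.U := (Option.some_injective _ hc2).symm
      refine ⟨repH2 w i, Or.inr ⟨i, hi1, hcU ▸ hc1, rfl⟩, ?_⟩
      intro x
      rw [height_repH2 hi1 (hcU ▸ hc1) x, hi2]
      by_cases hx : x = (y₀ - 1) + 1
      · rw [if_pos hx, hx, show y₀ - 1 + 1 = y₀ by omega]
        exact hchain y₀ hyQ.1 le_rfl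
      · rw [if_neg hx]
        simpa using hle x
    | H =>
      -- H starting at y₀
      obtain ⟨i, hi1, hi2⟩ := flat_even (w := w) (a := y₀) (t := y₀) le_rfl
        (fun s hs1 hs2 => by rw [show s = y₀ by omega]; exact he₁)
        (Or.inr (by rw [hprev]; simp))
        (by simp)
      have hflat : heightAt w (y₀ + 1) = heightAt w y₀ := by
        have := slope_eq he₁
        simp only [sval] at this
        omega
      have hg1 : heightAt w (y₀ + 1) + 1 ≤ heightAt z (y₀ + 1) := by
        by_contra hcon
        push_neg at hcon
        have hle1 := hle (y₀ + 1)
        have heq1 : heightAt z (y₀ + 1) = heightAt w (y₀ + 1) := by omega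
        have hgy : heightAt z y₀ = heightAt w y₀ + 1 := by
          have h1 := hchain y₀ hyQ.1 le_rfl
          have h2 := heightAt_le_succ z y₀
          omega
        -- back-chain: g = f + 1 on [x₀, y₀]
        have hback0 : ∀ d, x₀ ≤ y₀ - d → heightAt z (y₀ - d) = heightAt w (y₀ - d) + 1 := by
          intro d
          induction d with
          | zero => intro _; simpa using hgy
          | succ d ih =>
            intro hd
            have hih := ih (by omega)
            have hyd : y₀ - (d + 1) + 1 = y₀ - d := by omega
            have h2 : (expand w).get? (y₀ - (d+1)) = some Step.D :=
              hDrun _ (by omega) (by omega)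
            have h3 := slope_eq h2
            simp only [sval] at h3
            rw [hyd] at h3
            have h4 := heightAt_le_succ z (y₀ - (d + 1))
            rw [hyd] at h4
            have h5 := hchain (y₀ - (d+1)) (by omega) (by omega)
            omega
        have hback : ∀ t, x₀ ≤ t → t ≤ y₀ → heightAt z t = heightAt w t + 1 := by
          intro t h1 h2
          have := hback0 (y₀ - t) (by omega)
          rwa [show y₀ - (y₀ - t) = t by omega] at this
        -- z is flat at t₀
        have hzH : (expand z).get? t₀ = some Step.H := by
          apply get?_eq_of_slope (by omega)
          rw [← hx0]
          have h1 := hback x₀ le_rfl hyQ.1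
          simp only [sval]
          omega
        -- z has a D at x₀
        have hzD : (expand z).get? x₀ = some Step.D := by
          apply get?_eq_of_slope (by omega)
          rcases Nat.lt_or_ge x₀ y₀ with hxy | hxy
          · have h1 := hback x₀ le_rfl hyQ.1
            have h2 := hback (x₀ + 1) (by omega) (by omega)
            have h3 := slope_eq (hDrun x₀ (by omega) hxy)
            simp only [sval] at h3 ⊢
            omega
          · have hxy' : x₀ = y₀ := by omega
            rw [hxy']
            simp only [sval]
            omega
        -- run start for z
        have hPex : ∃ a, ∀ s, s < t₀ + 1 → a ≤ s → (expand z).get? s = some Step.H :=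
          ⟨t₀, fun s hs1 hs2 => by
            have : s = t₀ := by omega
            rw [this]; exact hzH⟩
        let a := Nat.find hPex
        have haP : ∀ s, s < t₀ + 1 → a ≤ s → (expand z).get? s = some Step.H :=
          Nat.find_spec hPex
        have hat₀ : a ≤ t₀ := Nat.find_le (fun s hs1 hs2 => by
          have : s = t₀ := by omega
          rw [this]; exact hzH)
        have hbd : a = 0 ∨ (expand z).get? (a - 1) ≠ some Step.H := by
          rcases Nat.eq_zero_or_pos a with h | h
          · exact Or.inl h
          · right
            intro hcon2
            have := Nat.find_min hPex (m := a - 1) (by omega)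
            push_neg at this
            obtain ⟨s, hs1, hs2, hs3⟩ := this
            rcases Nat.lt_or_ge s a with hsa | hsa
            · have : s = a - 1 := by omega
              rw [this] at hs3
              exact hs3 hcon2
            · exact hs3 (haP s hs1 hsa)
        -- parity contradiction
        have hevenz : Even (x₀ - a) := by
          by_contra hodd
          have := flat_odd (w := z) (a := a) (b := x₀) (by omega)
            (fun s hs1 hs2 => haP s (by omega) hs1)
            hbd hodd
          rw [hzD] at this
          simp at this
        have halt : a < t₀ := by
          rcases hevenz with ⟨k, hk⟩
          omega
        have hwbd : a = 0 ∨ (expand w).get? (a - 1) ≠ some Step.H := by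
          rcases hbd with h | h
          · exact Or.inl h
          · right
            rw [← key (a-1) (by omega)]
            exact h
        have := flat_odd (w := w) (a := a) (b := t₀) (by omega)
          (fun s hs1 hs2 => by
            rw [← key s hs2]
            exact haP s (by omega) hs1)
          hwbd
          (by
            intro hev
            rcases hev with ⟨k, hk⟩
            rcases hevenz with ⟨k', hk'⟩
            omega)
        rw [he₀] at this
        simp at this
      refine ⟨repUD w i, Or.inl ⟨i, hi1, rfl⟩, ?_⟩
      intro x
      rw [height_repUD hi1 x, hi2]
      by_cases hx : x = y₀ + 1
      · rw [if_pos hx, hx]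
        omega
      · rw [if_neg hx]
        simpa using hle x

end SchroderProof

-- Section 6: covering relation = raising
namespace SchroderProof

lemma schroder_iff {n : ℕ} {w : List Step} :
    IsSchroder n w ↔ IsGrandSchroder n w ∧ ∀ x, 0 ≤ heightAt w x := by
  constructor
  · rintro ⟨h1, h2, h3⟩
    exact ⟨⟨h1, h2⟩, (nonneg_iff w).1 h3⟩
  · rintro ⟨⟨h1, h2⟩, h3⟩
    exact ⟨h1, h2, (nonneg_iff w).2 h3⟩

lemma raise_grand {n : ℕ} {w w' : List Step} (hg : IsGrandSchroder n w)
    (h : RaiseRel w w') : IsGrandSchroder n w' := by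
  rcases h with ⟨i, hi, rfl⟩ | ⟨i, hi1, hi2, rfl⟩
  · exact grand_repUD hg hi
  · exact grand_repH2 hg hi1 hi2 (Or.inl ⟨rfl, rfl⟩)

lemma raise_height {w w' : List Step} (h : RaiseRel w w') :
    ∃ p, ∀ x, heightAt w' x = heightAt w x + (if x = p then 1 else 0) := by
  rcases h with ⟨i, hi, rfl⟩ | ⟨i, hi1, hi2, rfl⟩
  · exact ⟨epos w i + 1, height_repUD hi⟩
  · exact ⟨epos w i + 1, height_repH2 hi1 hi2⟩

lemma raise_schroder {n : ℕ} {w w' : List Step} (hw : IsSchroder n w)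
    (h : RaiseRel w w') : IsSchroder n w' := by
  rw [schroder_iff] at hw ⊢
  obtain ⟨p, hp⟩ := raise_height h
  refine ⟨raise_grand hw.1 h, fun x => ?_⟩
  rw [hp x]
  by_cases hx : x = p
  · rw [if_pos hx]
    have := hw.2 x
    omega
  · rw [if_neg hx]
    have := hw.2 x
    omega

lemma cover_of_raise {n : ℕ} {w w' : List Step} (hw : IsSchroder n w)
    (h : RaiseRel w w') : Covers (IsSchroder n) w w' := by
  have hw' : IsSchroder n w' := raise_schroder hw h
  obtain ⟨p, hp⟩ := raise_height h
  refine ⟨hw, hw', ⟨fun x => by rw [hp x]; by_cases hx : x = p <;> simp [hx], ?_⟩, ?_⟩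
  · intro hcon
    have := hcon p
    rw [hp p, if_pos rfl] at this
    omega
  · rintro z hz ⟨⟨hz1, hz2⟩, ⟨hz3, hz4⟩⟩
    rw [PathLe] at hz2
    push_neg at hz2
    obtain ⟨x, hx⟩ := hz2
    have h1 := hz1 x
    have h2 := hz3 x
    rw [hp x] at h2
    have hxp : x = p := by
      by_contra hcon
      rw [if_neg hcon] at h2
      omega
    rw [hxp] at hx h1 h2
    rw [if_pos rfl] at h2
    -- z and w' have the same heights
    have hzw' : z = w' := by
      apply eq_of_heights
      · rw [length_expand_gs (schroder_iff.1 hz).1,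
          length_expand_gs (schroder_iff.1 hw').1]
      · intro y
        by_cases hy : y = p
        · rw [hp y, if_pos hy, hy]
          omega
        · have := hz1 y
          have := hz3 y
          rw [hp y, if_neg hy] at *
          omega
    subst hzw'
    exact hz4 (fun y => le_rfl)

lemma raise_of_cover {n : ℕ} {w w' : List Step} (h : Covers (IsSchroder n) w w') :
    RaiseRel w w' := by
  obtain ⟨hw, hw', ⟨hlt1, hlt2⟩, hmid⟩ := h
  rw [PathLe] at hlt2
  push_neg at hlt2
  obtain ⟨r, hr, hrle⟩ := star (schroder_iff.1 hw).1 (schroder_iff.1 hw').1 hlt1 hlt2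
  by_cases hrw : r = w'
  · exact hrw ▸ hr
  · exfalso
    obtain ⟨p, hp⟩ := raise_height hr
    have hrs : IsSchroder n r := raise_schroder hw hr
    apply hmid r hrs
    constructor
    · refine ⟨fun x => by rw [hp x]; by_cases hx : x = p <;> simp [hx], ?_⟩
      intro hcon
      have := hcon p
      rw [hp p, if_pos rfl] at this
      omega
    · refine ⟨hrle, ?_⟩
      intro hcon
      apply hrw
      apply eq_of_heights
      · rw [length_expand_gs (schroder_iff.1 hrs).1,
          length_expand_gs (schroder_iff.1 hw').1]
      · intro y
        have := hcon y
        have := hrle y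
        omega

lemma covers_iff_raise {n : ℕ} {w w' : List Step} (hw : IsSchroder n w) :
    Covers (IsSchroder n) w w' ↔ RaiseRel w w' :=
  ⟨raise_of_cover, cover_of_raise hw⟩

end SchroderProof

-- Section 7: covered-by relation = lowering
namespace SchroderProof

def LowerRel (γ w : List Step) : Prop :=
  (∃ i, γ.get? i = some Step.U ∧ γ.get? (i + 1) = some Step.D ∧ w = repH2 γ i) ∨
  (∃ i, γ.get? i = some Step.H ∧ 1 ≤ height (γ.take i) ∧ w = repDU γ i)

lemma length_take_of_get? {w : List Step} {i : ℕ} {c : Step} (h : w.get? i = some c) :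
    (w.take i).length = i := take_length_of_get? h

lemma get?_append_len (A l : List Step) : (A ++ l).get? A.length = l.get? 0 := by
  rw [List.get?_append_right le_rfl, Nat.sub_self]

lemma get?_append_len1 (A l : List Step) : (A ++ l).get? (A.length + 1) = l.get? 1 := by
  rw [List.get?_append_right (by omega)]
  congr 1
  omega

lemma drop_append_len (A l : List Step) (k : ℕ) : (A ++ l).drop (A.length + k) = l.drop k := by
  rw [List.drop_append]
  rw [List.drop_of_length_le (by omega)]
  simp

lemma append_take' {A l : List Step} {k : ℕ} (h : A.length = k) : (A ++ l).take k = A := by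
  rw [← h, List.take_left]

lemma append_drop' {A l : List Step} {k : ℕ} (h : A.length = k) : (A ++ l).drop k = l := by
  rw [← h, List.drop_left]

lemma get?_mid0 {A l : List Step} {k : ℕ} (h : A.length = k) : (A ++ l).get? k = l.get? 0 := by
  rw [List.get?_append_right (by omega), h, Nat.sub_self]

lemma get?_mid1 {A l : List Step} {k : ℕ} (h : A.length = k) :
    (A ++ l).get? (k + 1) = l.get? 1 := by
  rw [List.get?_append_right (by omega), h, show k + 1 - k = 1 by omega]

lemma repH2_repUD {w : List Step} {i : ℕ} (hi : w.get? i = some Step.H) :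
    (repUD w i).get? i = some Step.U ∧ (repUD w i).get? (i + 1) = some Step.D ∧
      repH2 (repUD w i) i = w := by
  have hl := length_take_of_get? hi
  refine ⟨by rw [repUD, get?_mid0 hl]; rfl, by rw [repUD, get?_mid1 hl]; rfl, ?_⟩
  have e1 : (repUD w i).take i = w.take i := by rw [repUD, append_take' hl]
  have e2 : (repUD w i).drop (i + 2) = w.drop (i + 1) := by
    rw [repUD, show w.take i ++ Step.U :: Step.D :: w.drop (i+1)
        = (w.take i ++ [Step.U, Step.D]) ++ w.drop (i+1) by simp]
    exact append_drop' (by simp [hl])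
  rw [repH2, e1, e2]
  exact (decomp_of_get? hi).symm

lemma repUD_repH2 {γ : List Step} {i : ℕ} (hU : γ.get? i = some Step.U)
    (hD : γ.get? (i + 1) = some Step.D) :
    (repH2 γ i).get? i = some Step.H ∧ repUD (repH2 γ i) i = γ := by
  have hl := length_take_of_get? hU
  refine ⟨by rw [repH2, get?_mid0 hl]; rfl, ?_⟩
  have e1 : (repH2 γ i).take i = γ.take i := by rw [repH2, append_take' hl]
  have e2 : (repH2 γ i).drop (i + 1) = γ.drop (i + 2) := by
    rw [repH2, show γ.take i ++ Step.H :: γ.drop (i+2)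
        = (γ.take i ++ [Step.H]) ++ γ.drop (i+2) by simp]
    exact append_drop' (by simp [hl])
  rw [repUD, e1, e2]
  exact (dcmp2 hU hD).symm

lemma repH2_repDU {γ : List Step} {i : ℕ} (hi : γ.get? i = some Step.H) :
    (repDU γ i).get? i = some Step.D ∧ (repDU γ i).get? (i + 1) = some Step.U ∧
      repH2 (repDU γ i) i = γ := by
  have hl := length_take_of_get? hi
  refine ⟨by rw [repDU, get?_mid0 hl]; rfl, by rw [repDU, get?_mid1 hl]; rfl, ?_⟩
  have e1 : (repDU γ i).take i = γ.take i := by rw [repDU, append_take' hl]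
  have e2 : (repDU γ i).drop (i + 2) = γ.drop (i + 1) := by
    rw [repDU, show γ.take i ++ Step.D :: Step.U :: γ.drop (i+1)
        = (γ.take i ++ [Step.D, Step.U]) ++ γ.drop (i+1) by simp]
    exact append_drop' (by simp [hl])
  rw [repH2, e1, e2]
  exact (decomp_of_get? hi).symm

lemma repDU_repH2 {w : List Step} {i : ℕ} (hD : w.get? i = some Step.D)
    (hU : w.get? (i + 1) = some Step.U) :
    (repH2 w i).get? i = some Step.H ∧ repDU (repH2 w i) i = w := by
  have hl := length_take_of_get? hD
  refine ⟨by rw [repH2, get?_mid0 hl]; rfl, ?_⟩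
  have e1 : (repH2 w i).take i = w.take i := by rw [repH2, append_take' hl]
  have e2 : (repH2 w i).drop (i + 1) = w.drop (i + 2) := by
    rw [repH2, show w.take i ++ Step.H :: w.drop (i+2)
        = (w.take i ++ [Step.H]) ++ w.drop (i+2) by simp]
    exact append_drop' (by simp [hl])
  rw [repDU, e1, e2]
  exact (dcmp2 hD hU).symm

lemma take_repH2 {w : List Step} {i : ℕ} {c : Step} (h : w.get? i = some c) :
    (repH2 w i).take i = w.take i := by
  rw [repH2, append_take' (length_take_of_get? h)]

/-- height of the flat abscissa over an `H` letter -/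
lemma height_flat_H {γ : List Step} {i : ℕ} (hi : γ.get? i = some Step.H) :
    heightAt γ (epos γ i + 1) = height (γ.take i) := by
  have h1 := slope_eq (get?_expand_epos hi)
  rw [h1, heightAt_epos]
  simp [sval]

lemma lower_iff {n : ℕ} {γ w : List Step} (hγ : IsSchroder n γ) :
    (IsSchroder n w ∧ RaiseRel w γ) ↔ LowerRel γ w := by
  constructor
  · rintro ⟨hws, hr⟩
    rcases hr with ⟨i, hiH, heq⟩ | ⟨i, hD, hU, heq⟩
    · obtain ⟨g1, g2, g3⟩ := repH2_repUD hiH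
      rw [← heq] at g1 g2 g3
      exact Or.inl ⟨i, g1, g2, g3.symm⟩
    · obtain ⟨g1, g2⟩ := repDU_repH2 hD hU
      rw [← heq] at g1 g2
      refine Or.inr ⟨i, g1, ?_, g2.symm⟩
      -- the height condition
      have hepos : epos γ i = epos w i := by
        rw [epos, epos, heq, take_repH2 hD]
      have hh := height_repH2 hD hU (epos w i + 1)
      rw [if_pos rfl, ← heq] at hh
      have hw0 : 0 ≤ heightAt w (epos w i + 1) := (schroder_iff.1 hws).2 _
      have hflat := height_flat_H g1
      rw [hepos] at hflat
      omega
  · rintro (⟨i, hU, hD, rfl⟩ | ⟨i, hiH, hht, rfl⟩)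
    · obtain ⟨g1, g2⟩ := repUD_repH2 hU hD
      have hgrand : IsGrandSchroder n (repH2 γ i) :=
        grand_repH2 (schroder_iff.1 hγ).1 hU hD (Or.inr ⟨rfl, rfl⟩)
      have hnn : ∀ x, 0 ≤ heightAt (repH2 γ i) x := by
        intro x
        rw [height_repH2' hU hD x]
        have hγ0 := (schroder_iff.1 hγ).2 x
        by_cases hx : x = epos γ i + 1
        · rw [if_pos hx, hx]
          have h1 := slope_eq (get?_expand_epos hU)
          rw [heightAt_epos] at h1
          have h2 := hγ.2.2 i
          simp only [sval] at h1
          omega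
        · rw [if_neg hx]
          omega
      exact ⟨schroder_iff.2 ⟨hgrand, hnn⟩, Or.inl ⟨i, g1, g2.symm⟩⟩
    · obtain ⟨g1, g2, g3⟩ := repH2_repDU hiH
      have hgrand : IsGrandSchroder n (repDU γ i) :=
        grand_repDU (schroder_iff.1 hγ).1 hiH
      have hnn : ∀ x, 0 ≤ heightAt (repDU γ i) x := by
        intro x
        rw [height_repDU hiH x]
        have hγ0 := (schroder_iff.1 hγ).2 x
        by_cases hx : x = epos γ i + 1
        · rw [if_pos hx, hx]
          have := height_flat_H hiH
          omega
        · rw [if_neg hx]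
          omega
      exact ⟨schroder_iff.2 ⟨hgrand, hnn⟩, Or.inr ⟨i, g1, g2, g3.symm⟩⟩

lemma covers_iff_lower {n : ℕ} {γ w : List Step} (hγ : IsSchroder n γ) :
    Covers (IsSchroder n) w γ ↔ LowerRel γ w := by
  rw [← lower_iff hγ]
  constructor
  · intro h
    exact ⟨h.1, raise_of_cover h⟩
  · rintro ⟨hw, hr⟩
    exact cover_of_raise hw hr

end SchroderProof

-- Section 8: counting
namespace SchroderProof

lemma count_eq_card (c : Step) (l : List Step) :
    l.count c = ((Finset.range l.length).filter (fun i => l.get? i = some c)).card := by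
  induction l using List.reverseRecOn with
  | nil => simp
  | append_singleton l a ih =>
    rw [List.count_append, List.length_append]
    have hsplit : (Finset.range (l.length + [a].length)).filter
        (fun i => (l ++ [a]).get? i = some c)
        = ((Finset.range l.length).filter (fun i => l.get? i = some c))
          ∪ (if a = c then {l.length} else ∅) := by
      ext i
      simp only [Finset.mem_filter, Finset.mem_range, Finset.mem_union, List.length_singleton]
      constructor
      · rintro ⟨hi, hget⟩
        rcases Nat.lt_or_ge i l.length with h | h
        · left
          refine ⟨h, ?_⟩
          rwa [List.get?_append h] at hget
        · have : i = l.length := by omega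
          subst this
          rw [get?_mid0 rfl] at hget
          simp at hget
          right
          rw [if_pos hget]
          simp
      · rintro (⟨hi, hget⟩ | hmem)
        · exact ⟨by omega, by rwa [List.get?_append hi]⟩
        · by_cases hac : a = c
          · rw [if_pos hac] at hmem
            simp at hmem
            subst hmem
            refine ⟨by omega, ?_⟩
            rw [get?_mid0 rfl]
            simp [hac]
          · rw [if_neg hac] at hmem
            simp at hmem
    rw [hsplit, Finset.card_union_of_disjoint, ← ih]
    · by_cases hac : a = c
      · rw [if_pos hac]
        subst hac
        simp
      · rw [if_neg hac]
        have h0 : List.count c [a] = 0 := by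
          simp [List.count_cons]
          exact hac
        rw [h0]
        simp
    · by_cases hac : a = c
      · rw [if_pos hac]
        rw [Finset.disjoint_right]
        intro x hx
        simp at hx
        subst hx
        exact fun hm => absurd (Finset.mem_range.1 (Finset.mem_filter.1 hm).1) (lt_irrefl _)
      · rw [if_neg hac]
        exact Finset.disjoint_empty_right _

lemma get?_lt_length {l : List Step} {i : ℕ} {c : Step} (h : l.get? i = some c) :
    i < l.length := (List.get?_eq_some.1 h).1

lemma bump_eq {γ : List Step} {p q : ℕ} {d : ℤ} (hd : d ≠ 0)
    (h : ∀ x, heightAt γ x + (if x = p then d else 0)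
        = heightAt γ x + (if x = q then d else 0)) : p = q := by
  by_contra hne
  have := h p
  rw [if_pos rfl, if_neg hne] at this
  omega

lemma repUD_inj {γ : List Step} {i j : ℕ} (hi : γ.get? i = some Step.H)
    (hj : γ.get? j = some Step.H) (h : repUD γ i = repUD γ j) : i = j := by
  have hb : epos γ i + 1 = epos γ j + 1 := by
    apply bump_eq (d := (1 : ℤ)) one_ne_zero
    intro x
    rw [← height_repUD hi, ← height_repUD hj, h]
  exact epos_inj (get?_lt_length hi) (get?_lt_length hj) (by omega)

lemma repH2_inj {γ : List Step} {i j : ℕ}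
    (hi : γ.get? i = some Step.D) (hi1 : γ.get? (i+1) = some Step.U)
    (hj : γ.get? j = some Step.D) (hj1 : γ.get? (j+1) = some Step.U)
    (h : repH2 γ i = repH2 γ j) : i = j := by
  have hb : epos γ i + 1 = epos γ j + 1 := by
    apply bump_eq (d := (1 : ℤ)) one_ne_zero
    intro x
    rw [← height_repH2 hi hi1, ← height_repH2 hj hj1, h]
  exact epos_inj (get?_lt_length hi) (get?_lt_length hj) (by omega)

lemma repUD_ne_repH2 {γ : List Step} {i j : ℕ} (hi : γ.get? i = some Step.H)
    (hj : γ.get? j = some Step.D) (hj1 : γ.get? (j+1) = some Step.U) :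
    repUD γ i ≠ repH2 γ j := by
  intro h
  have hb : epos γ i + 1 = epos γ j + 1 := by
    apply bump_eq (d := (1 : ℤ)) one_ne_zero
    intro x
    rw [← height_repUD hi, ← height_repH2 hj hj1, h]
  have := epos_inj (get?_lt_length hi) (get?_lt_length hj) (by omega)
  subst this
  rw [hi] at hj
  simp at hj

lemma repH2_inj' {γ : List Step} {i j : ℕ}
    (hi : γ.get? i = some Step.U) (hi1 : γ.get? (i+1) = some Step.D)
    (hj : γ.get? j = some Step.U) (hj1 : γ.get? (j+1) = some Step.D)
    (h : repH2 γ i = repH2 γ j) : i = j := by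
  have hb : epos γ i + 1 = epos γ j + 1 := by
    apply bump_eq (d := (-1 : ℤ)) (by norm_num)
    intro x
    rw [← height_repH2' hi hi1, ← height_repH2' hj hj1, h]
  exact epos_inj (get?_lt_length hi) (get?_lt_length hj) (by omega)

lemma repDU_inj {γ : List Step} {i j : ℕ} (hi : γ.get? i = some Step.H)
    (hj : γ.get? j = some Step.H) (h : repDU γ i = repDU γ j) : i = j := by
  have hb : epos γ i + 1 = epos γ j + 1 := by
    apply bump_eq (d := (-1 : ℤ)) (by norm_num)
    intro x
    rw [← height_repDU hi, ← height_repDU hj, h]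
  exact epos_inj (get?_lt_length hi) (get?_lt_length hj) (by omega)

lemma repH2_ne_repDU {γ : List Step} {i j : ℕ}
    (hi : γ.get? i = some Step.U) (hi1 : γ.get? (i+1) = some Step.D)
    (hj : γ.get? j = some Step.H) :
    repH2 γ i ≠ repDU γ j := by
  intro h
  have hb : epos γ i + 1 = epos γ j + 1 := by
    apply bump_eq (d := (-1 : ℤ)) (by norm_num)
    intro x
    rw [← height_repH2' hi hi1, ← height_repDU hj, h]
  have := epos_inj (get?_lt_length hi) (get?_lt_length hj) (by omega)
  subst this
  rw [hi] at hj
  simp at hj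

end SchroderProof

-- Section 9: the main theorem
namespace SchroderProof

lemma card_covers_up {n : ℕ} {γ : List Step} (hγ : IsSchroder n γ) :
    Nat.card {w : List Step // Covers (IsSchroder n) γ w} =
      γ.count Step.H + countFactor Step.D Step.U γ := by
  classical
  have hmem : ∀ w, Covers (IsSchroder n) γ w ↔
      w ∈ ((Finset.range γ.length).filter (fun i => γ.get? i = some Step.H)).image (repUD γ)
        ∪ ((Finset.range γ.length).filter
            (fun i => γ.get? i = some Step.D ∧ γ.get? (i + 1) = some Step.U)).image
          (repH2 γ) := by
    intro w
    rw [covers_iff_raise hγ]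
    constructor
    · rintro (⟨i, hi, rfl⟩ | ⟨i, hi1, hi2, rfl⟩)
      · exact Finset.mem_union_left _ (Finset.mem_image_of_mem _
          (Finset.mem_filter.2 ⟨Finset.mem_range.2 (get?_lt_length hi), hi⟩))
      · exact Finset.mem_union_right _ (Finset.mem_image_of_mem _
          (Finset.mem_filter.2 ⟨Finset.mem_range.2 (get?_lt_length hi1), hi1, hi2⟩))
    · intro hw
      rcases Finset.mem_union.1 hw with h | h
      · obtain ⟨i, hi, rfl⟩ := Finset.mem_image.1 h
        exact Or.inl ⟨i, (Finset.mem_filter.1 hi).2, rfl⟩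
      · obtain ⟨i, hi, rfl⟩ := Finset.mem_image.1 h
        exact Or.inr ⟨i, (Finset.mem_filter.1 hi).2.1, (Finset.mem_filter.1 hi).2.2, rfl⟩
  have hdisj : Disjoint
      (((Finset.range γ.length).filter (fun i => γ.get? i = some Step.H)).image (repUD γ))
      (((Finset.range γ.length).filter
          (fun i => γ.get? i = some Step.D ∧ γ.get? (i + 1) = some Step.U)).image
        (repH2 γ)) := by
    rw [Finset.disjoint_left]
    rintro a ha hb
    obtain ⟨i, hi, rfl⟩ := Finset.mem_image.1 ha
    obtain ⟨j, hj, heq⟩ := Finset.mem_image.1 hb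
    exact repUD_ne_repH2 (Finset.mem_filter.1 hi).2 (Finset.mem_filter.1 hj).2.1
      (Finset.mem_filter.1 hj).2.2 heq.symm
  have hinj1 : Set.InjOn (repUD γ)
      ((Finset.range γ.length).filter (fun i => γ.get? i = some Step.H)) :=
    fun i hi j hj h => repUD_inj (Finset.mem_filter.1 hi).2 (Finset.mem_filter.1 hj).2 h
  have hinj2 : Set.InjOn (repH2 γ)
      ((Finset.range γ.length).filter
        (fun i => γ.get? i = some Step.D ∧ γ.get? (i + 1) = some Step.U)) :=
    fun i hi j hj h => repH2_inj (Finset.mem_filter.1 hi).2.1 (Finset.mem_filter.1 hi).2.2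
      (Finset.mem_filter.1 hj).2.1 (Finset.mem_filter.1 hj).2.2 h
  rw [Nat.card_congr (Equiv.subtypeEquivRight hmem), Nat.card_eq_fintype_card,
    Fintype.card_coe, Finset.card_union_of_disjoint hdisj,
    Finset.card_image_of_injOn hinj1, Finset.card_image_of_injOn hinj2,
    ← count_eq_card]
  rfl

lemma card_covers_down {n : ℕ} {γ : List Step} (hγ : IsSchroder n γ) :
    Nat.card {w : List Step // Covers (IsSchroder n) w γ} =
      countHighH γ + countFactor Step.U Step.D γ := by
  classical
  have hmem : ∀ w, Covers (IsSchroder n) w γ ↔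
      w ∈ ((Finset.range γ.length).filter
            (fun i => γ.get? i = some Step.H ∧ 1 ≤ height (γ.take i))).image (repDU γ)
        ∪ ((Finset.range γ.length).filter
            (fun i => γ.get? i = some Step.U ∧ γ.get? (i + 1) = some Step.D)).image
          (repH2 γ) := by
    intro w
    rw [covers_iff_lower hγ]
    constructor
    · rintro (⟨i, hi1, hi2, rfl⟩ | ⟨i, hi1, hi2, rfl⟩)
      · exact Finset.mem_union_right _ (Finset.mem_image_of_mem _
          (Finset.mem_filter.2 ⟨Finset.mem_range.2 (get?_lt_length hi1), hi1, hi2⟩))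
      · exact Finset.mem_union_left _ (Finset.mem_image_of_mem _
          (Finset.mem_filter.2 ⟨Finset.mem_range.2 (get?_lt_length hi1), hi1, hi2⟩))
    · intro hw
      rcases Finset.mem_union.1 hw with h | h
      · obtain ⟨i, hi, rfl⟩ := Finset.mem_image.1 h
        exact Or.inr ⟨i, (Finset.mem_filter.1 hi).2.1, (Finset.mem_filter.1 hi).2.2, rfl⟩
      · obtain ⟨i, hi, rfl⟩ := Finset.mem_image.1 h
        exact Or.inl ⟨i, (Finset.mem_filter.1 hi).2.1, (Finset.mem_filter.1 hi).2.2, rfl⟩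
  have hdisj : Disjoint
      (((Finset.range γ.length).filter
          (fun i => γ.get? i = some Step.H ∧ 1 ≤ height (γ.take i))).image (repDU γ))
      (((Finset.range γ.length).filter
          (fun i => γ.get? i = some Step.U ∧ γ.get? (i + 1) = some Step.D)).image
        (repH2 γ)) := by
    rw [Finset.disjoint_left]
    rintro a ha hb
    obtain ⟨i, hi, rfl⟩ := Finset.mem_image.1 ha
    obtain ⟨j, hj, heq⟩ := Finset.mem_image.1 hb
    exact repH2_ne_repDU (Finset.mem_filter.1 hj).2.1 (Finset.mem_filter.1 hj).2.2
      (Finset.mem_filter.1 hi).2.1 heq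
  have hinj1 : Set.InjOn (repDU γ)
      ((Finset.range γ.length).filter
        (fun i => γ.get? i = some Step.H ∧ 1 ≤ height (γ.take i))) :=
    fun i hi j hj h => repDU_inj (Finset.mem_filter.1 hi).2.1 (Finset.mem_filter.1 hj).2.1 h
  have hinj2 : Set.InjOn (repH2 γ)
      ((Finset.range γ.length).filter
        (fun i => γ.get? i = some Step.U ∧ γ.get? (i + 1) = some Step.D)) :=
    fun i hi j hj h => repH2_inj' (Finset.mem_filter.1 hi).2.1 (Finset.mem_filter.1 hi).2.2
      (Finset.mem_filter.1 hj).2.1 (Finset.mem_filter.1 hj).2.2 h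
  rw [Nat.card_congr (Equiv.subtypeEquivRight hmem), Nat.card_eq_fintype_card,
    Fintype.card_coe, Finset.card_union_of_disjoint hdisj,
    Finset.card_image_of_injOn hinj1, Finset.card_image_of_injOn hinj2]
  rfl

end SchroderProof

/-- In the Schröder lattice `S_n`, the number of paths covering a Schröder path `γ`
equals `ω_H(γ) + ω_DU(γ)`, and the number of paths covered by `γ` equals
`ω*_H(γ) + ω_UD(γ)`, where `ω_H` counts horizontal steps, `ω*_H` counts horizontal
steps at height at least `1`, and `ω_DU`, `ω_UD` count occurrences of a `D` step
immediately followed by a `U` step, resp. a `U` step immediately followed by a `D`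
step. -/
theorem schroder_delta_nabla (n : ℕ) (γ : List Step) (hγ : IsSchroder n γ) :
    Nat.card {w : List Step // Covers (IsSchroder n) γ w} =
      γ.count Step.H + countFactor Step.D Step.U γ ∧
    Nat.card {w : List Step // Covers (IsSchroder n) w γ} =
      countHighH γ + countFactor Step.U Step.D γ := by
  exact ⟨SchroderProof.card_covers_up hγ, SchroderProof.card_covers_down hγ⟩
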